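/- Let α : [0, log 2] → [0,1] be the inverse of the strictly increasing function t ↦ ψ(t)/(1+t) on [0,1]. Then for every t ∈ (0, log 2], 4α(t)/(t·(1 + α(t))) = (4/t) · (1/2 − √(H⁻¹(log 2 − t)·(1 − H⁻¹(log 2 − t)))). -/
import Mathlib



/-- `ψ(t) = (1/2)(1−√t)² log((1−√t)²) + (1/2)(1+√t)² log((1+√t)²) − (1+t) log(1+t)`
(note `Real.log 0 = 0`). -/
noncomputable def psi (t : ℝ) : ℝ :=
  (1 / 2) * (1 - Real.sqrt t) ^ 2 * Real.log ((1 - Real.sqrt t) ^ 2) +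
    (1 / 2) * (1 + Real.sqrt t) ^ 2 * Real.log ((1 + Real.sqrt t) ^ 2) -
    (1 + t) * Real.log (1 + t)

/-- Key identity: for `a ∈ [0,1]`, the binary entropy of `(1−√a)²/(2(1+a))`
equals `log 2 − ψ(a)/(1+a)`. -/
lemma psi_key (a : ℝ) (ha0 : 0 ≤ a) (ha1 : a ≤ 1) :
    Real.binEntropy ((1 - Real.sqrt a) ^ 2 / (2 * (1 + a))) =
      Real.log 2 - psi a / (1 + a) := by
  set s := Real.sqrt a with hs
  have hs2 : s ^ 2 = a := Real.sq_sqrt ha0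
  have hs0 : 0 ≤ s := Real.sqrt_nonneg a
  have hs1 : s ≤ 1 := Real.sqrt_le_one.mpr ha1
  have h1a : (0:ℝ) < 1 + a := by linarith
  rcases eq_or_lt_of_le hs1 with h | h
  · -- s = 1, a = 1
    have ha : a = 1 := by rw [← hs2, h]; norm_num
    have hL : (1 - s) ^ 2 / (2 * (1 + a)) = 0 := by rw [← h]; ring
    have hpsi : psi a = 2 * Real.log 2 := by
      rw [ha]; unfold psi; rw [Real.sqrt_one]
      norm_num
      rw [show (4:ℝ) = 2 ^ 2 by norm_num, Real.log_pow]
      ring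
    rw [hL, hpsi, ha, Real.binEntropy_zero]
    ring
  · have hu1 : (0:ℝ) < (1 - s) ^ 2 := pow_pos (by linarith) 2
    have hu2 : (0:ℝ) < (1 + s) ^ 2 := by positivity
    have h2a : (0:ℝ) < 2 * (1 + a) := by linarith
    have hsum : (1 - s) ^ 2 + (1 + s) ^ 2 = 2 * (1 + a) := by nlinarith [hs2]
    have h1u : 1 - (1 - s) ^ 2 / (2 * (1 + a)) = (1 + s) ^ 2 / (2 * (1 + a)) := by
      field_simp; linarith
    rw [Real.binEntropy, h1u, Real.log_inv, Real.log_inv,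
      Real.log_div hu1.ne' h2a.ne', Real.log_div hu2.ne' h2a.ne',
      Real.log_mul (by norm_num) h1a.ne', psi,
      Real.log_pow, Real.log_pow]
    field_simp
    linear_combination (2 * Real.log 2 + 2 * Real.log (1 + a)) * hs2

/-- Let `α : [0, log 2] → [0,1]` be the inverse of `t ↦ ψ(t)/(1+t)` and let
`H⁻¹ : [0, log 2] → [0, 1/2]` be the inverse of the entropy function
`H(x) = −x log x − (1−x) log(1−x)` on `[0, 1/2]`. Then for every
`t ∈ (0, log 2]`,
`4α(t)/(t(1+α(t))) = (4/t)·(1/2 − √(H⁻¹(log 2 − t)(1 − H⁻¹(log 2 − t))))`. -/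
theorem cOf_explicit (α : ℝ → ℝ)
    (hαmem : ∀ y ∈ Set.Icc (0 : ℝ) (Real.log 2), α y ∈ Set.Icc (0 : ℝ) 1)
    (hαright : ∀ y ∈ Set.Icc (0 : ℝ) (Real.log 2), psi (α y) / (1 + α y) = y)
    (hαleft : ∀ t ∈ Set.Icc (0 : ℝ) 1, α (psi t / (1 + t)) = t)
    (Hinv : ℝ → ℝ)
    (hHinv : ∀ y ∈ Set.Icc (0 : ℝ) (Real.log 2),
      Hinv y ∈ Set.Icc (0 : ℝ) (1 / 2) ∧
        -(Hinv y) * Real.log (Hinv y) - (1 - Hinv y) * Real.log (1 - Hinv y) = y) :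
    ∀ t ∈ Set.Ioc (0 : ℝ) (Real.log 2),
      4 * α t / (t * (1 + α t)) =
        (4 / t) *
          (1 / 2 - Real.sqrt (Hinv (Real.log 2 - t) * (1 - Hinv (Real.log 2 - t)))) := by
  intro t ht
  obtain ⟨ht0, htle⟩ := ht
  have htIcc : t ∈ Set.Icc (0 : ℝ) (Real.log 2) := ⟨ht0.le, htle⟩
  set a := α t with haeq
  obtain ⟨ha0, ha1⟩ := hαmem t htIcc
  have hta : psi a / (1 + a) = t := hαright t htIcc
  have h1a : (0:ℝ) < 1 + a := by linarith
  have hyIcc : Real.log 2 - t ∈ Set.Icc (0 : ℝ) (Real.log 2) :=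
    ⟨by linarith, by linarith⟩
  set x := Hinv (Real.log 2 - t) with hxeq
  obtain ⟨⟨hx0, hx1⟩, hxH⟩ := hHinv _ hyIcc
  set s := Real.sqrt a with hseq
  have hs2 : s ^ 2 = a := Real.sq_sqrt ha0
  have hs0 : 0 ≤ s := Real.sqrt_nonneg a
  have hs1 : s ≤ 1 := Real.sqrt_le_one.mpr ha1
  set u := (1 - s) ^ 2 / (2 * (1 + a)) with hueq
  have hbu : Real.binEntropy u = Real.log 2 - t := by
    rw [hueq, hseq, psi_key a ha0 ha1, hta]
  have hbx : Real.binEntropy x = Real.log 2 - t := by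
    simp only [Real.binEntropy, Real.log_inv]
    linear_combination hxH
  have humem : u ∈ Set.Icc (0 : ℝ) 2⁻¹ := by
    constructor
    · apply div_nonneg (by positivity) (by linarith)
    · rw [div_le_iff₀ (by linarith)]
      nlinarith [hs2]
  have hxmem : x ∈ Set.Icc (0 : ℝ) 2⁻¹ := ⟨hx0, by linarith⟩
  have hxu : x = u :=
    Real.binEntropy_strictMonoOn.injOn hxmem humem (hbx.trans hbu.symm)
  have hsqrt : Real.sqrt (x * (1 - x)) = (1 - a) / (2 * (1 + a)) := by
    rw [hxu]
    have hprod : u * (1 - u) = ((1 - a) / (2 * (1 + a))) ^ 2 := by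
      rw [hueq, ← hs2]
      field_simp
      ring
    rw [hprod]
    exact Real.sqrt_sq (div_nonneg (by linarith) (by linarith))
  rw [hsqrt]
  rw [div_mul_eq_mul_div, div_eq_div_iff (by positivity) ht0.ne']
  field_simp
  ring
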